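/- Let γ ∈ ℤ/2^{n+1}ℤ with a odd, and m odd with m·m' ≡ 1 (mod 2^{n+2}). In the Weil representation of Mp₂(ℤ) on ℂD_{2ⁿ}(a) where D_{2ⁿ}(a) = (ℤ/2^{n+1}ℤ, γ ↦ aγ²/2^{n+2}), one has (for n odd) ST^{m'}ST^mS e^γ = e(-3a/8)·e(am/8)·e(-am'γ²/2^{n+2})·e^{-m'γ}, and (for n even) ST^{m'}ST^mS e^γ = [(1+e(-a/4))³(1+e(am/4))/4]·e(-am'γ²/2^{n+2})·e^{-m'γ}. -/

import Mathlib

open Complex Finset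

noncomputable section

/-- `e(x) = exp(2πix)`. -/
def eC (x : ℂ) : ℂ := Complex.exp (2 * Real.pi * Complex.I * x)

/-- The basis vector `e^γ` of `ℂ D_{2ⁿ}(a)`. -/
def bas {α : Type*} [DecidableEq α] (γ : α) : α → ℂ := fun x => if x = γ then 1 else 0

/-- The value `e(sign(D_{2ⁿ}(a))/8)`, namely `e(a/8)` for `n` odd and `(1+e(a/4))/√2`
for `n` even. -/
def sgEven (n : ℕ) (a : ℤ) : ℂ :=
  if Odd n then eC ((a : ℂ) / 8) else (1 + eC ((a : ℂ) / 4)) / Real.sqrt 2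

lemma eC_add (x y : ℂ) : eC (x + y) = eC x * eC y := by
  unfold eC; rw [← Complex.exp_add]; congr 1; ring

lemma eC_zero : eC 0 = 1 := by simp [eC]

lemma eC_intCast (k : ℤ) : eC (k : ℂ) = 1 := by
  unfold eC
  rw [show 2 * (Real.pi:ℂ) * I * k = k * (2 * Real.pi * I) by ring,
    Complex.exp_int_mul_two_pi_mul_I]

lemma eC_ne_zero (x : ℂ) : eC x ≠ 0 := Complex.exp_ne_zero _

lemma eC_zpow (x : ℂ) (k : ℤ) : eC x ^ k = eC (k * x) := by
  unfold eC; rw [← Complex.exp_int_mul]; congr 1; ring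

lemma eC_pow (x : ℂ) (k : ℕ) : eC x ^ k = eC (k * x) := by
  unfold eC; rw [← Complex.exp_nat_mul]; congr 1; ring

lemma eC_inv (x : ℂ) : (eC x)⁻¹ = eC (-x) := by
  unfold eC; rw [← Complex.exp_neg]; congr 1; ring

lemma eC_half : eC (1/2) = -1 := by
  unfold eC
  rw [show 2 * (Real.pi:ℂ) * I * (1/2) = Real.pi * I by ring, Complex.exp_pi_mul_I]

lemma eC_odd_half (c : ℤ) (hc : Odd c) : eC ((c:ℂ)/2) = -1 := by
  obtain ⟨t, rfl⟩ := hc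
  rw [show (((2*t+1 : ℤ)):ℂ)/2 = (t:ℂ) + 1/2 by push_cast; ring, eC_add, eC_intCast,
    one_mul, eC_half]

/-- The character `k ↦ e(k/2^(n+2))` on `ℤ`. -/
def e2 (n : ℕ) (k : ℤ) : ℂ := eC ((k : ℂ) / 2 ^ (n + 2))

lemma e2_zero (n : ℕ) : e2 n 0 = 1 := by simp [e2, eC_zero]

lemma e2_add (n : ℕ) (j k : ℤ) : e2 n (j + k) = e2 n j * e2 n k := by
  unfold e2; rw [← eC_add]; congr 1; push_cast; ring

lemma e2_period (n : ℕ) (t : ℤ) : e2 n (2^(n+2) * t) = 1 := by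
  unfold e2
  have h : (((2^(n+2)*t : ℤ)):ℂ)/2^(n+2) = (t:ℂ) := by
    push_cast
    field_simp
  rw [h]
  exact eC_intCast t

lemma e2_congr (n : ℕ) {j k : ℤ} (h : (2^(n+2) : ℤ) ∣ (j - k)) : e2 n j = e2 n k := by
  obtain ⟨t, ht⟩ := h
  have hj : j = k + 2^(n+2)*t := by linarith
  rw [hj, e2_add, e2_period, mul_one]

lemma e2_zpow (n : ℕ) (j k : ℤ) : e2 n j ^ k = e2 n (k * j) := by
  unfold e2; rw [eC_zpow]; congr 1; push_cast; ring

lemma e2_half (n : ℕ) (s : ℤ) (hs : Odd s) : e2 n (2^(n+1) * s) = -1 := by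
  unfold e2
  have h : (((2^(n+1)*s : ℤ)):ℂ)/2^(n+2) = (s:ℂ)/2 := by
    have h2 : ((2:ℂ))^(n+1) ≠ 0 := pow_ne_zero _ two_ne_zero
    field_simp
    push_cast
    ring
  rw [h]
  exact eC_odd_half s hs

lemma e2_four (n : ℕ) (k : ℤ) : e2 (n+2) (4*k) = e2 n k := by
  unfold e2
  congr 1
  push_cast
  rw [show ((2:ℂ)^(n+2+2)) = 4 * 2^(n+2) by ring]
  rw [mul_div_mul_left _ _ (by norm_num : (4:ℂ) ≠ 0)]


lemma zmod_sum (N : ℕ) [NeZero N] (f : ℕ → ℂ) :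
    ∑ x : ZMod N, f x.val = ∑ j ∈ Finset.range N, f j := by
  refine Finset.sum_nbij' (fun x : ZMod N => x.val) (fun j => (j : ZMod N))
    ?_ ?_ ?_ ?_ ?_
  · intro x _; exact Finset.mem_range.mpr (ZMod.val_lt x)
  · intro j _; exact Finset.mem_univ _
  · intro x _; simp [ZMod.natCast_val, ZMod.cast_id]
  · intro j hj; exact ZMod.val_cast_of_lt (Finset.mem_range.mp hj)
  · intro x _; rfl

lemma two_pow_dvd_iff_zmod (N : ℕ) (s : ℤ) : ((s : ZMod N) = 0) ↔ (N : ℤ) ∣ s :=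
  ZMod.intCast_zmod_eq_zero_iff_dvd s N

/-- Linear character sum. -/
lemma char_sum (n : ℕ) (s : ℤ) :
    ∑ δ : ZMod (2^(n+1)), e2 n (2 * (δ.val:ℤ) * s) =
      if ((s : ZMod (2^(n+1))) = 0) then ((2^(n+1) : ℕ) : ℂ) else 0 := by
  by_cases h : ((s : ZMod (2^(n+1))) = 0)
  · rw [if_pos h]
    obtain ⟨t, ht⟩ := (ZMod.intCast_zmod_eq_zero_iff_dvd s (2^(n+1))).mp h
    have : ∀ δ : ZMod (2^(n+1)), e2 n (2 * (δ.val:ℤ) * s) = 1 := by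
      intro δ
      rw [show (2 * (δ.val:ℤ) * s) = 2^(n+2) * ((δ.val:ℤ) * t) by
        rw [ht]; push_cast; ring]
      exact e2_period n _
    rw [Finset.sum_congr rfl (fun δ _ => this δ)]
    simp
  · rw [if_neg h]
    have hpow0 : ((2^(n+1):ℤ) : ZMod (2^(n+1))) = 0 := by
      rw [ZMod.intCast_zmod_eq_zero_iff_dvd]
      exact_mod_cast dvd_refl _
    have hnd : ¬ ((2^(n+1) : ℤ) ∣ s) := by
      rintro ⟨t, ht⟩
      apply h
      rw [ht, Int.cast_mul, hpow0, zero_mul]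
    set ζ : ℂ := eC ((s:ℂ) / 2^(n+1)) with hζ
    have hterm : ∀ j : ℕ, e2 n (2 * (j:ℤ) * s) = ζ ^ j := by
      intro j
      rw [hζ, eC_pow]
      unfold e2
      congr 1
      have h2 : ((2:ℂ))^(n+2) = 2 * 2^(n+1) := by ring
      push_cast
      rw [h2]
      have h3 : ((2:ℂ))^(n+1) ≠ 0 := pow_ne_zero _ two_ne_zero
      field_simp
    have hζN : ζ ^ (2^(n+1) : ℕ) = 1 := by
      rw [eC_pow]
      have : ((2^(n+1):ℕ):ℂ) * ((s:ℂ)/2^(n+1)) = ((s:ℤ):ℂ) := by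
        push_cast
        have h3 : ((2:ℂ))^(n+1) ≠ 0 := pow_ne_zero _ two_ne_zero
        field_simp
      rw [this, eC_intCast]
    have hζ1 : ζ ≠ 1 := by
      intro hc
      apply hnd
      rw [hζ] at hc
      unfold eC at hc
      rw [Complex.exp_eq_one_iff] at hc
      obtain ⟨k, hk⟩ := hc
      have hpi : (2 * (Real.pi:ℂ) * I) ≠ 0 := by
        simp [Real.pi_ne_zero, Complex.I_ne_zero]
      rw [show (k:ℂ) * (2 * (Real.pi:ℂ) * I) = (2 * (Real.pi:ℂ) * I) * k by ring] at hk
      have h4 : ((s:ℂ)/2^(n+1)) = k := mul_left_cancel₀ hpi hk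
      have h3 : ((2:ℂ))^(n+1) ≠ 0 := pow_ne_zero _ two_ne_zero
      rw [div_eq_iff h3] at h4
      have h5 : (s:ℂ) = ((k * 2^(n+1) : ℤ):ℂ) := by push_cast; exact h4
      have h6 : s = k * 2^(n+1) := by exact_mod_cast h5
      exact ⟨k, by linarith⟩
    calc ∑ δ : ZMod (2^(n+1)), e2 n (2 * (δ.val:ℤ) * s)
        = ∑ j ∈ Finset.range (2^(n+1)), ζ ^ j := by
          rw [zmod_sum (2^(n+1)) (fun j => e2 n (2 * (j:ℤ) * s))]
          exact Finset.sum_congr rfl (fun j _ => hterm j)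
      _ = (ζ ^ (2^(n+1):ℕ) - 1)/(ζ - 1) := geom_sum_eq hζ1 _
      _ = 0 := by rw [hζN]; simp


/-- The quadratic Gauss sum `∑_{j mod 2^{n+1}} e(c j² / 2^{n+2})`. -/
def gQ (n : ℕ) (c : ℤ) : ℂ := ∑ j ∈ Finset.range (2^(n+1)), e2 n (c * (j:ℤ)^2)

lemma sum_range_double (M : ℕ) (f : ℕ → ℂ) :
    ∑ j ∈ Finset.range (2*M), f j = ∑ t ∈ Finset.range M, (f (2*t) + f (2*t+1)) := by
  induction M with
  | zero => simp
  | succ M ih =>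
    rw [Finset.sum_range_succ, ← ih, show 2*(M+1) = (2*M)+1+1 by ring,
      Finset.sum_range_succ, Finset.sum_range_succ]
    ring_nf

lemma sum_range_halves (M : ℕ) (f : ℕ → ℂ) :
    ∑ j ∈ Finset.range (2*M), f j = ∑ j ∈ Finset.range M, (f j + f (j + M)) := by
  rw [← Finset.sum_range_add_sum_Ico f (by omega : M ≤ 2*M), Finset.sum_Ico_eq_sum_range,
    show 2*M - M = M by omega, ← Finset.sum_add_distrib]
  exact Finset.sum_congr rfl (fun j _ => by rw [Nat.add_comm M j])

lemma gQ_step (n : ℕ) (c : ℤ) (hc : Odd c) : gQ (n+2) c = 2 * gQ n c := by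
  unfold gQ
  rw [show (2:ℕ)^(n+2+1) = 2 * 2^(n+2) by ring, sum_range_double, Finset.sum_add_distrib]
  have hev : ∑ t ∈ Finset.range (2^(n+2)), e2 (n+2) (c * ((2*t : ℕ):ℤ)^2)
      = 2 * ∑ j ∈ Finset.range (2^(n+1)), e2 n (c * (j:ℤ)^2) := by
    have h1 : ∀ t : ℕ, e2 (n+2) (c * ((2*t : ℕ):ℤ)^2) = e2 n (c * (t:ℤ)^2) := by
      intro t
      rw [show (c * ((2*t : ℕ):ℤ)^2) = 4 * (c * (t:ℤ)^2) by push_cast; ring]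
      exact e2_four n _
    rw [Finset.sum_congr rfl (fun t _ => h1 t)]
    rw [show (2:ℕ)^(n+2) = 2 * 2^(n+1) by ring, sum_range_halves, Finset.sum_add_distrib]
    have h2 : ∀ j : ℕ, e2 n (c * ((j + 2^(n+1) : ℕ):ℤ)^2) = e2 n (c * (j:ℤ)^2) := by
      intro j
      apply e2_congr
      refine ⟨c * j + c * 2^n, ?_⟩
      push_cast
      ring
    rw [Finset.sum_congr rfl (fun j _ => h2 j)]
    ring
  have hodd : ∑ t ∈ Finset.range (2^(n+2)), e2 (n+2) (c * ((2*t+1 : ℕ):ℤ)^2) = 0 := by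
    rw [show (2:ℕ)^(n+2) = 2 * 2^(n+1) by ring, sum_range_halves]
    have h3 : ∀ t : ℕ, e2 (n+2) (c * ((2*(t + 2^(n+1))+1 : ℕ):ℤ)^2)
        = - e2 (n+2) (c * ((2*t+1 : ℕ):ℤ)^2) := by
      intro t
      have key : (c * ((2*(t + 2^(n+1))+1 : ℕ):ℤ)^2)
          = (c * ((2*t+1 : ℕ):ℤ)^2) + 2^((n+2)+1) * (c * (2*(t:ℤ)+1))
            + 2^((n+2)+2) * (c * 2^n) := by
        push_cast
        ring
      have hodd2 : Odd (c * (2*(t:ℤ)+1)) := hc.mul ⟨(t:ℤ), by ring⟩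
      rw [key, e2_add, e2_add, e2_period, mul_one, e2_half (n+2) _ hodd2, mul_neg_one]
    have h4 : ∀ t : ℕ, e2 (n+2) (c * ((2*t+1 : ℕ):ℤ)^2)
        + e2 (n+2) (c * ((2*(t + 2^(n+1))+1 : ℕ):ℤ)^2) = 0 := by
      intro t; rw [h3 t]; ring
    calc ∑ t ∈ Finset.range (2^(n+1)),
          (e2 (n+2) (c * ((2*t+1 : ℕ):ℤ)^2) + e2 (n+2) (c * ((2*(t + 2^(n+1))+1 : ℕ):ℤ)^2))
        = ∑ t ∈ Finset.range (2^(n+1)), (0:ℂ) := by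
          refine Finset.sum_congr rfl (fun t _ => ?_)
          rw [show 2*(t + 2^(n+1))+1 = 2*t+1 + (2^(n+1) + 2^(n+1)) by ring] at *
          rw [show 2*t+1 + (2^(n+1) + 2^(n+1)) = 2*(t + 2^(n+1))+1 by ring]
          exact h4 t
      _ = 0 := by simp
  rw [hev, hodd, add_zero]

lemma sqrt_ne_zero' (x : ℝ) (hx : 0 < x) : ((Real.sqrt x : ℝ):ℂ) ≠ 0 := by
  simp only [ne_eq, Complex.ofReal_eq_zero]
  positivity

lemma gQ_zero (c : ℤ) : gQ 0 c = Real.sqrt (2^(0+1)) * sgEven 0 c := by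
  unfold gQ sgEven
  rw [show (2:ℕ)^(0+1) = 2 by norm_num]
  rw [Finset.sum_range_succ, Finset.sum_range_one]
  rw [show (c * ((0:ℕ):ℤ)^2) = 0 by norm_num, e2_zero]
  rw [show (c * ((1:ℕ):ℤ)^2) = c by norm_num]
  have h1 : e2 0 c = eC ((c:ℂ)/4) := by unfold e2; norm_num
  have h2 : ((Real.sqrt 2 : ℝ):ℂ) ≠ 0 := sqrt_ne_zero' 2 (by norm_num)
  simp only [Nat.odd_iff, if_neg]
  rw [h1]
  push_cast
  field_simp
lemma gQ_one (c : ℤ) (hc : Odd c) : gQ 1 c = Real.sqrt (2^(1+1)) * sgEven 1 c := by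
  unfold gQ sgEven
  rw [show (2:ℕ)^(1+1) = 4 by norm_num]
  rw [Finset.sum_range_succ, Finset.sum_range_succ, Finset.sum_range_succ,
    Finset.sum_range_one]
  rw [show (c * ((0:ℕ):ℤ)^2) = 0 by norm_num, e2_zero]
  have h1 : e2 1 (c * ((1:ℕ):ℤ)^2) = eC ((c:ℂ)/8) := by
    unfold e2; norm_num
  have h2 : e2 1 (c * ((2:ℕ):ℤ)^2) = -1 := by
    rw [show (c * ((2:ℕ):ℤ)^2) = 2^(1+1) * c by push_cast; ring]
    exact e2_half 1 c hc
  have h3 : e2 1 (c * ((3:ℕ):ℤ)^2) = eC ((c:ℂ)/8) := by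
    have : e2 1 (c * ((3:ℕ):ℤ)^2) = e2 1 c := by
      apply e2_congr
      exact ⟨c, by push_cast; ring⟩
    rw [this]; unfold e2; norm_num
  rw [h1, h2, h3]
  have h4 : ((Real.sqrt ((2:ℝ)^(1+1)) : ℝ):ℂ) = 2 := by
    rw [show (2:ℝ)^(1+1) = 2^2 by norm_num, Real.sqrt_sq (by norm_num : (0:ℝ) ≤ 2)]
    norm_num
  rw [if_pos (by norm_num : Odd 1), h4]
  push_cast
  ring

lemma gQ_val (n : ℕ) (c : ℤ) (hc : Odd c) :
    gQ n c = Real.sqrt (2^(n+1)) * sgEven n c := by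
  induction n using Nat.strong_induction_on with
  | _ n ih =>
    match n with
    | 0 => exact gQ_zero c
    | 1 => exact gQ_one c hc
    | (k+2) =>
      rw [gQ_step k c hc, ih k (by omega)]
      have hsg : sgEven (k+2) c = sgEven k c := by
        unfold sgEven
        simp [Nat.odd_add]
      have hsqrt : (Real.sqrt (2^(k+2+1)) : ℝ) = 2 * Real.sqrt (2^(k+1)) := by
        rw [show (2:ℝ)^(k+2+1) = 2^2 * 2^(k+1) by ring, Real.sqrt_mul (by positivity),
          Real.sqrt_sq (by norm_num : (0:ℝ) ≤ 2)]
      rw [hsg, hsqrt]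
      push_cast
      ring

lemma Bsum' (n : ℕ) (a m m' : ℤ) (hmm' : (2^(n+2):ℤ) ∣ (m*m' - 1)) (u : ℤ) :
    ∑ β : ZMod (2^(n+1)), e2 n (a*m*(β.val:ℤ)^2 - 2*a*u*(β.val:ℤ))
      = gQ n (a*m) * e2 n (-(a*m'*u^2)) := by
  obtain ⟨k, hk⟩ := hmm'
  have step1 : ∀ β : ZMod (2^(n+1)),
      e2 n (a*m*(β.val:ℤ)^2 - 2*a*u*(β.val:ℤ))
        = e2 n (a*m*((β.val:ℤ) - m'*u)^2) * e2 n (-(a*m'*u^2)) := by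
    intro β
    rw [← e2_add]
    apply e2_congr
    refine ⟨k*(2*a*u*(β.val:ℤ) - a*m'*u^2), ?_⟩
    linear_combination (2*a*u*(β.val:ℤ) - a*m'*u^2) * hk
  set w : ZMod (2^(n+1)) := ((m'*u : ℤ) : ZMod (2^(n+1))) with hw
  have step2 : ∑ β : ZMod (2^(n+1)), e2 n (a*m*(β.val:ℤ)^2)
      = ∑ β : ZMod (2^(n+1)), e2 n (a*m*((β.val:ℤ) - m'*u)^2) := by
    apply Finset.sum_bijective (fun β => β + w) (Equiv.addRight w).bijective
    · intro i; simp
    · intro i _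
      have hd : ((2^(n+1):ℕ):ℤ) ∣ (((i+w).val:ℤ) - m'*u - (i.val:ℤ)) := by
        rw [← ZMod.intCast_zmod_eq_zero_iff_dvd]
        push_cast [ZMod.natCast_val, ZMod.cast_id]
        rw [hw]
        push_cast
        ring
      obtain ⟨t, ht⟩ := hd
      have h5 : ((i+w).val:ℤ) - m'*u = (i.val:ℤ) + 2^(n+1)*t := by push_cast at ht; linarith
      apply e2_congr
      refine ⟨-(a*m*(i.val:ℤ)*t + a*m*2^n*t^2), ?_⟩
      rw [h5]
      ring
  have step3 : ∑ β : ZMod (2^(n+1)), e2 n (a*m*(β.val:ℤ)^2) = gQ n (a*m) := by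
    rw [zmod_sum (2^(n+1)) (fun j => e2 n (a*m*(j:ℤ)^2))]
    rfl
  calc ∑ β : ZMod (2^(n+1)), e2 n (a*m*(β.val:ℤ)^2 - 2*a*u*(β.val:ℤ))
      = ∑ β : ZMod (2^(n+1)), e2 n (a*m*((β.val:ℤ) - m'*u)^2) * e2 n (-(a*m'*u^2)) :=
        Finset.sum_congr rfl (fun β _ => step1 β)
    _ = (∑ β : ZMod (2^(n+1)), e2 n (a*m*((β.val:ℤ) - m'*u)^2)) * e2 n (-(a*m'*u^2)) :=
        (Finset.sum_mul _ _ _).symm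
    _ = gQ n (a*m) * e2 n (-(a*m'*u^2)) := by rw [← step2, step3]

lemma zpow_eigen {V : Type*} [AddCommGroup V] [Module ℂ V] (f : V ≃ₗ[ℂ] V) (v : V)
    (c : ℂ) (hc : c ≠ 0) (h : f v = c • v) (k : ℤ) : (f ^ k) v = c ^ k • v := by
  have hsymm : f.symm v = c⁻¹ • v := by
    apply f.injective
    rw [f.apply_symm_apply, map_smul, h, smul_smul, inv_mul_cancel₀ hc, one_smul]
  induction k using Int.induction_on with
  | zero => simp
  | succ k ih =>
    rw [zpow_add_one, zpow_add_one₀ hc]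
    show (f ^ (k:ℤ)) (f v) = _
    rw [h, map_smul, ih, smul_smul]
    rw [mul_comm]
  | pred k ih =>
    rw [zpow_sub_one, zpow_sub_one₀ hc]
    show (f ^ (-(k:ℤ))) (f⁻¹ v) = _
    have : (f⁻¹ : V ≃ₗ[ℂ] V) v = f.symm v := rfl
    rw [this, hsymm, map_smul, ih, smul_smul]
    rw [mul_comm]


/-- in the Weil representation of `Mp₂(ℤ)` on
`ℂ D_{2ⁿ}(a) = ℂ[ℤ/2^{n+1}ℤ]` (with `T` and `S` acting as `TL` and `SL` below), for `m`
odd with `m m' ≡ 1 (mod 2^{n+2})` one has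
`ρ(S T^{m'} S T^m S) e^γ = e(-3a/8) e(am/8) e(-am'γ²/2^{n+2}) e^{-m'γ}` for `n` odd, and
`ρ(S T^{m'} S T^m S) e^γ = [(1+e(-a/4))³(1+e(am/4))/4] e(-am'γ²/2^{n+2}) e^{-m'γ}`
for `n` even. -/
theorem stmt14 (n : ℕ) (a : ℤ) (ha : Odd a) (m m' : ℤ) (hm : Odd m)
    (hmm' : (m * m' : ℤ) ≡ 1 [ZMOD (2 ^ (n + 2))])
    (TL SL : (ZMod (2 ^ (n + 1)) → ℂ) ≃ₗ[ℂ] (ZMod (2 ^ (n + 1)) → ℂ))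
    (hT : ∀ γ : ZMod (2 ^ (n + 1)), TL (bas γ) =
      eC ((a : ℂ) * (γ.val : ℂ) ^ 2 / 2 ^ (n + 2)) • bas γ)
    (hS : ∀ γ : ZMod (2 ^ (n + 1)), SL (bas γ) =
      ((sgEven n a)⁻¹ / Real.sqrt (2 ^ (n + 1))) •
        ∑ β : ZMod (2 ^ (n + 1)),
          eC (-(2 * (a : ℂ) * (γ.val : ℂ) * (β.val : ℂ)) / 2 ^ (n + 2)) • bas β) :
    ∀ γ : ZMod (2 ^ (n + 1)),
      (Odd n →
        (SL * TL ^ m' * SL * TL ^ m * SL) (bas γ) =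
          (eC (-(3 * (a : ℂ)) / 8) * eC ((a : ℂ) * (m : ℂ) / 8) *
              eC (-((a : ℂ) * (m' : ℂ) * (γ.val : ℂ) ^ 2) / 2 ^ (n + 2))) •
            bas (-(m' : ZMod (2 ^ (n + 1))) * γ)) ∧
      (Even n →
        (SL * TL ^ m' * SL * TL ^ m * SL) (bas γ) =
          (((1 + eC (-(a : ℂ) / 4)) ^ 3 * (1 + eC ((a : ℂ) * (m : ℂ) / 4)) / 4) *
              eC (-((a : ℂ) * (m' : ℂ) * (γ.val : ℂ) ^ 2) / 2 ^ (n + 2))) •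
            bas (-(m' : ZMod (2 ^ (n + 1))) * γ)) := by
  intro γ
  haveI : NeZero ((2:ℕ)^(n+1)) := ⟨by positivity⟩
  have hdvd : ((2:ℤ)^(n+2)) ∣ (m*m' - 1) := by
    have h1 := Int.ModEq.dvd hmm'
    rw [show m*m' - 1 = -(1 - m*m') by ring]
    exact dvd_neg.mpr h1
  set τ : ℂ := ((sgEven n a)⁻¹ / (Real.sqrt (2 ^ (n + 1)) : ℝ)) with hτ
  set G : ℤ := (γ.val : ℤ) with hG
  -- basis form of hS
  have hSb : ∀ β : ZMod (2^(n+1)), SL (bas β) =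
      τ • ∑ δ : ZMod (2^(n+1)), e2 n (-(2*a*(β.val:ℤ)*(δ.val:ℤ))) • bas δ := by
    intro β
    rw [hS β]
    congr 1
    refine Finset.sum_congr rfl fun δ _ => ?_
    congr 1
    unfold e2
    congr 1
    push_cast
    ring
  -- action of SL on a general combination
  have hSf : ∀ f : ZMod (2^(n+1)) → ℂ,
      SL (∑ β : ZMod (2^(n+1)), f β • bas β) =
        ∑ δ : ZMod (2^(n+1)),
          (τ * ∑ β : ZMod (2^(n+1)), f β * e2 n (-(2*a*(β.val:ℤ)*(δ.val:ℤ)))) • bas δ := by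
    intro f
    rw [map_sum]
    calc ∑ β : ZMod (2^(n+1)), SL (f β • bas β)
        = ∑ β : ZMod (2^(n+1)), ∑ δ : ZMod (2^(n+1)),
            (τ * (f β * e2 n (-(2*a*(β.val:ℤ)*(δ.val:ℤ))))) • bas δ := by
          refine Finset.sum_congr rfl fun β _ => ?_
          rw [map_smul, hSb β, smul_smul, Finset.smul_sum]
          refine Finset.sum_congr rfl fun δ _ => ?_
          rw [smul_smul, mul_comm (f β) τ, mul_assoc]
      _ = ∑ δ : ZMod (2^(n+1)), ∑ β : ZMod (2^(n+1)),
            (τ * (f β * e2 n (-(2*a*(β.val:ℤ)*(δ.val:ℤ))))) • bas δ := Finset.sum_comm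
      _ = ∑ δ : ZMod (2^(n+1)),
            (τ * ∑ β : ZMod (2^(n+1)), f β * e2 n (-(2*a*(β.val:ℤ)*(δ.val:ℤ)))) • bas δ := by
          refine Finset.sum_congr rfl fun δ _ => ?_
          rw [Finset.mul_sum, Finset.sum_smul]
  -- action of TL^k on basis vectors
  have hTb : ∀ (k : ℤ) (β : ZMod (2^(n+1))), (TL ^ k) (bas β) =
      e2 n (k * (a*(β.val:ℤ)^2)) • bas β := by
    intro k β
    have hc : eC ((a:ℂ) * ((β.val:ℕ):ℂ)^2 / 2^(n+2)) = e2 n (a*(β.val:ℤ)^2) := by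
      unfold e2; congr 1; push_cast; ring
    rw [zpow_eigen TL (bas β) _ (eC_ne_zero _) (hT β) k, hc, e2_zpow]
  have hTf : ∀ (k : ℤ) (f : ZMod (2^(n+1)) → ℂ),
      (TL ^ k) (∑ β : ZMod (2^(n+1)), f β • bas β) =
        ∑ β : ZMod (2^(n+1)), (f β * e2 n (k * (a*(β.val:ℤ)^2))) • bas β := by
    intro k f
    rw [map_sum]
    refine Finset.sum_congr rfl fun β _ => ?_
    rw [map_smul, hTb k β, smul_smul]
  -- step 1: SL (bas γ)
  have h1 : SL (bas γ) = ∑ β : ZMod (2^(n+1)), (τ * e2 n (-(2*a*G*(β.val:ℤ)))) • bas β := by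
    rw [hSb γ, Finset.smul_sum]
    refine Finset.sum_congr rfl fun β _ => ?_
    rw [smul_smul]
  -- step 2: TL^m
  have h2 : (TL ^ m) (SL (bas γ)) =
      ∑ β : ZMod (2^(n+1)),
        ((τ * e2 n (-(2*a*G*(β.val:ℤ)))) * e2 n (m * (a*(β.val:ℤ)^2))) • bas β := by
    rw [h1, hTf m]
  -- step 3: SL again
  have h3 : SL ((TL ^ m) (SL (bas γ))) =
      ∑ δ : ZMod (2^(n+1)),
        (τ * ∑ β : ZMod (2^(n+1)),
          ((τ * e2 n (-(2*a*G*(β.val:ℤ)))) * e2 n (m * (a*(β.val:ℤ)^2)))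
            * e2 n (-(2*a*(β.val:ℤ)*(δ.val:ℤ)))) • bas δ := by
    rw [h2, hSf]
  -- evaluate the inner Gauss sum
  have h3' : ∀ δ : ZMod (2^(n+1)),
      (τ * ∑ β : ZMod (2^(n+1)),
        ((τ * e2 n (-(2*a*G*(β.val:ℤ)))) * e2 n (m * (a*(β.val:ℤ)^2)))
          * e2 n (-(2*a*(β.val:ℤ)*(δ.val:ℤ))))
      = τ^2 * gQ n (a*m) * e2 n (-(a*m'*(G+(δ.val:ℤ))^2)) := by
    intro δ
    have hterm : ∀ β : ZMod (2^(n+1)),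
        ((τ * e2 n (-(2*a*G*(β.val:ℤ)))) * e2 n (m * (a*(β.val:ℤ)^2)))
          * e2 n (-(2*a*(β.val:ℤ)*(δ.val:ℤ)))
        = τ * e2 n (a*m*(β.val:ℤ)^2 - 2*a*(G+(δ.val:ℤ))*(β.val:ℤ)) := by
      intro β
      calc ((τ * e2 n (-(2*a*G*(β.val:ℤ)))) * e2 n (m * (a*(β.val:ℤ)^2)))
            * e2 n (-(2*a*(β.val:ℤ)*(δ.val:ℤ)))
          = τ * (e2 n (-(2*a*G*(β.val:ℤ))) * e2 n (m * (a*(β.val:ℤ)^2))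
              * e2 n (-(2*a*(β.val:ℤ)*(δ.val:ℤ)))) := by ring
        _ = τ * e2 n (-(2*a*G*(β.val:ℤ)) + m * (a*(β.val:ℤ)^2) + -(2*a*(β.val:ℤ)*(δ.val:ℤ))) := by
            rw [e2_add, e2_add]
        _ = τ * e2 n (a*m*(β.val:ℤ)^2 - 2*a*(G+(δ.val:ℤ))*(β.val:ℤ)) := by
            rw [show (-(2*a*G*(β.val:ℤ)) + m * (a*(β.val:ℤ)^2) + -(2*a*(β.val:ℤ)*(δ.val:ℤ)))
              = a*m*(β.val:ℤ)^2 - 2*a*(G+(δ.val:ℤ))*(β.val:ℤ) by ring]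
    rw [Finset.sum_congr rfl (fun β _ => hterm β), ← Finset.mul_sum,
      Bsum' n a m m' hdvd (G+(δ.val:ℤ))]
    ring
  have h3'' : SL ((TL ^ m) (SL (bas γ))) =
      ∑ δ : ZMod (2^(n+1)),
        (τ^2 * gQ n (a*m) * e2 n (-(a*m'*(G+(δ.val:ℤ))^2))) • bas δ := by
    rw [h3]
    exact Finset.sum_congr rfl fun δ _ => by rw [h3' δ]
  -- step 4: TL^m'
  have h4 : (TL ^ m') (SL ((TL ^ m) (SL (bas γ)))) =
      ∑ δ : ZMod (2^(n+1)),
        ((τ^2 * gQ n (a*m) * e2 n (-(a*m'*(G+(δ.val:ℤ))^2)))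
          * e2 n (m' * (a*(δ.val:ℤ)^2))) • bas δ := by
    rw [h3'', hTf m']
  -- step 5: final SL
  have h5 : (SL * TL ^ m' * SL * TL ^ m * SL) (bas γ) =
      ∑ ε : ZMod (2^(n+1)),
        (τ * ∑ δ : ZMod (2^(n+1)),
          ((τ^2 * gQ n (a*m) * e2 n (-(a*m'*(G+(δ.val:ℤ))^2)))
            * e2 n (m' * (a*(δ.val:ℤ)^2))) * e2 n (-(2*a*(δ.val:ℤ)*(ε.val:ℤ)))) • bas ε := by
    show SL ((TL ^ m') (SL ((TL ^ m) (SL (bas γ))))) = _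
    rw [h4, hSf]
  -- the unit `a` in `ZMod (2^(n+1))`
  have hu : IsUnit ((a:ℤ) : ZMod (2^(n+1))) := by
    have hcop : IsCoprime (a : ℤ) 2 := by
      obtain ⟨t, rfl⟩ := ha
      exact ⟨1, -t, by ring⟩
    obtain ⟨u, v, huv⟩ := hcop.pow_right (n := n+1)
    have hua : ((u:ℤ) : ZMod (2^(n+1))) * ((a:ℤ) : ZMod (2^(n+1))) = 1 := by
      have hz : ((u*a - 1 : ℤ) : ZMod (2^(n+1))) = 0 := by
        rw [ZMod.intCast_zmod_eq_zero_iff_dvd]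
        refine ⟨-v, ?_⟩
        push_cast
        linarith
      have h9 : ((u*a : ℤ) : ZMod (2^(n+1))) - ((1:ℤ) : ZMod (2^(n+1))) = 0 := by
        rw [← Int.cast_sub]
        exact hz
      have h10 := sub_eq_zero.mp h9
      rw [← Int.cast_mul, h10, Int.cast_one]
    exact IsUnit.of_mul_eq_one _ (by rw [mul_comm]; exact hua)
  -- condition for the linear character sum
  have hcond : ∀ ε : ZMod (2^(n+1)),
      ((((-(a*m'*G + a*(ε.val:ℤ))) : ℤ) : ZMod (2^(n+1))) = 0)
        ↔ ε = -(m' : ZMod (2^(n+1))) * γ := by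
    intro ε
    have hcast : (((-(a*m'*G + a*(ε.val:ℤ))) : ℤ) : ZMod (2^(n+1)))
        = -(((a:ℤ) : ZMod (2^(n+1))) * ((m' : ZMod (2^(n+1)))*γ + ε)) := by
      rw [hG]
      push_cast [ZMod.natCast_val, ZMod.cast_id]
      ring
    rw [hcast, neg_eq_zero]
    constructor
    · intro h0
      have h1 : ((m' : ZMod (2^(n+1)))*γ + ε) = 0 := by
        have := hu.mul_right_eq_zero.mp h0
        exact this
      have := eq_neg_of_add_eq_zero_right h1
      rw [this, neg_mul]
    · intro h0
      rw [h0]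
      simp
  -- evaluate the outer sum
  have h5' : ∀ ε : ZMod (2^(n+1)),
      (τ * ∑ δ : ZMod (2^(n+1)),
        ((τ^2 * gQ n (a*m) * e2 n (-(a*m'*(G+(δ.val:ℤ))^2)))
          * e2 n (m' * (a*(δ.val:ℤ)^2))) * e2 n (-(2*a*(δ.val:ℤ)*(ε.val:ℤ))))
      = if ε = -(m' : ZMod (2^(n+1))) * γ then
          (τ^3 * gQ n (a*m) * e2 n (-(a*m'*G^2)) * (((2:ℕ)^(n+1):ℕ):ℂ)) else 0 := by
    intro ε
    have hterm : ∀ δ : ZMod (2^(n+1)),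
        ((τ^2 * gQ n (a*m) * e2 n (-(a*m'*(G+(δ.val:ℤ))^2)))
          * e2 n (m' * (a*(δ.val:ℤ)^2))) * e2 n (-(2*a*(δ.val:ℤ)*(ε.val:ℤ)))
        = (τ^2 * gQ n (a*m) * e2 n (-(a*m'*G^2)))
            * e2 n (2*(δ.val:ℤ)*(-(a*m'*G + a*(ε.val:ℤ)))) := by
      intro δ
      calc ((τ^2 * gQ n (a*m) * e2 n (-(a*m'*(G+(δ.val:ℤ))^2)))
            * e2 n (m' * (a*(δ.val:ℤ)^2))) * e2 n (-(2*a*(δ.val:ℤ)*(ε.val:ℤ)))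
          = τ^2 * gQ n (a*m) * (e2 n (-(a*m'*(G+(δ.val:ℤ))^2))
              * e2 n (m' * (a*(δ.val:ℤ)^2)) * e2 n (-(2*a*(δ.val:ℤ)*(ε.val:ℤ)))) := by ring
        _ = τ^2 * gQ n (a*m) * e2 n (-(a*m'*(G+(δ.val:ℤ))^2) + m' * (a*(δ.val:ℤ)^2)
              + -(2*a*(δ.val:ℤ)*(ε.val:ℤ))) := by rw [e2_add, e2_add]
        _ = τ^2 * gQ n (a*m) * e2 n (-(a*m'*G^2)
              + 2*(δ.val:ℤ)*(-(a*m'*G + a*(ε.val:ℤ)))) := by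
            rw [show (-(a*m'*(G+(δ.val:ℤ))^2) + m' * (a*(δ.val:ℤ)^2)
              + -(2*a*(δ.val:ℤ)*(ε.val:ℤ)))
              = -(a*m'*G^2) + 2*(δ.val:ℤ)*(-(a*m'*G + a*(ε.val:ℤ))) by ring]
        _ = (τ^2 * gQ n (a*m) * e2 n (-(a*m'*G^2)))
              * e2 n (2*(δ.val:ℤ)*(-(a*m'*G + a*(ε.val:ℤ)))) := by rw [e2_add]; ring
    rw [Finset.sum_congr rfl (fun δ _ => hterm δ), ← Finset.mul_sum,
      char_sum n (-(a*m'*G + a*(ε.val:ℤ)))]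
    rw [if_congr (hcond ε) rfl rfl]
    rw [mul_ite, mul_ite, mul_zero, mul_zero]
    congr 1
    push_cast
    ring
  -- collapse the sum
  have h6 : (SL * TL ^ m' * SL * TL ^ m * SL) (bas γ) =
      (τ^3 * gQ n (a*m) * e2 n (-(a*m'*G^2)) * (((2:ℕ)^(n+1):ℕ):ℂ))
        • bas (-(m' : ZMod (2^(n+1))) * γ) := by
    rw [h5, Finset.sum_congr rfl (fun ε _ => by rw [h5' ε])]
    simp only [ite_smul, zero_smul]
    rw [Finset.sum_ite_eq' Finset.univ (-(m' : ZMod (2^(n+1))) * γ)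
      (fun ε => (τ^3 * gQ n (a*m) * e2 n (-(a*m'*G^2)) * (((2:ℕ)^(n+1):ℕ):ℂ)) • bas ε)]
    simp
  -- final scalar identity
  have hx : (0:ℝ) ≤ (2:ℝ)^(n+1) := by positivity
  have hr2 : ((Real.sqrt ((2:ℝ)^(n+1)):ℝ):ℂ)^2 = (((2:ℕ)^(n+1):ℕ):ℂ) := by
    rw [← Complex.ofReal_pow, Real.sq_sqrt hx]
    norm_cast
  have hr0 : ((Real.sqrt ((2:ℝ)^(n+1)):ℝ):ℂ) ≠ 0 := sqrt_ne_zero' _ (by positivity)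
  have hsg0 : sgEven n a ≠ 0 := by
    unfold sgEven
    by_cases hodd : Odd n
    · rw [if_pos hodd]; exact eC_ne_zero _
    · rw [if_neg hodd]
      have hz2 : (eC ((a:ℂ)/4))^2 = -1 := by
        rw [eC_pow]
        rw [show ((2:ℕ):ℂ) * ((a:ℂ)/4) = (a:ℂ)/2 by push_cast; ring]
        exact eC_odd_half a ha
      have h1z : (1 + eC ((a:ℂ)/4)) ≠ 0 := by
        intro h
        have hz : eC ((a:ℂ)/4) = -1 := by
          have h8 : (1:ℂ) + eC ((a:ℂ)/4) = 0 := h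
          linear_combination h8
        rw [hz] at hz2
        norm_num at hz2
      have hs2 : ((Real.sqrt 2:ℝ):ℂ) ≠ 0 := sqrt_ne_zero' _ (by norm_num)
      exact div_ne_zero h1z hs2
  have key : τ^3 * gQ n (a*m) * (((2:ℕ)^(n+1):ℕ):ℂ)
      = ((sgEven n a)⁻¹)^3 * sgEven n (a*m) := by
    rw [gQ_val n (a*m) (ha.mul hm), hτ, ← hr2]
    field_simp
  have he2eC : e2 n (-(a*m'*G^2)) = eC (-((a:ℂ) * (m':ℂ) * ((γ.val:ℕ):ℂ)^2) / 2^(n+2)) := by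
    rw [hG]
    unfold e2
    congr 1
    push_cast
    ring
  constructor
  · -- odd case
    intro hpar
    have hsga : sgEven n a = eC ((a:ℂ)/8) := by unfold sgEven; rw [if_pos hpar]
    have hsgam : sgEven n (a*m) = eC ((a:ℂ)*(m:ℂ)/8) := by
      unfold sgEven
      rw [if_pos hpar]
      congr 1
      push_cast
      ring
    rw [h6]
    congr 1
    rw [show τ^3 * gQ n (a*m) * e2 n (-(a*m'*G^2)) * (((2:ℕ)^(n+1):ℕ):ℂ)
      = (τ^3 * gQ n (a*m) * (((2:ℕ)^(n+1):ℕ):ℂ)) * e2 n (-(a*m'*G^2)) by ring,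
      key, hsga, hsgam, he2eC]
    congr 1
    rw [eC_inv, eC_pow]
    congr 1
    push_cast
    ring
  · -- even case
    intro hpar
    have hnodd : ¬ Odd n := Nat.not_odd_iff_even.mpr hpar
    have hsga : sgEven n a = (1 + eC ((a:ℂ)/4)) / Real.sqrt 2 := by
      unfold sgEven; rw [if_neg hnodd]
    have hsgam : sgEven n (a*m) = (1 + eC ((a:ℂ)*(m:ℂ)/4)) / Real.sqrt 2 := by
      unfold sgEven
      rw [if_neg hnodd]
      congr 3
      push_cast
      ring
    rw [h6]
    congr 1
    rw [show τ^3 * gQ n (a*m) * e2 n (-(a*m'*G^2)) * (((2:ℕ)^(n+1):ℕ):ℂ)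
      = (τ^3 * gQ n (a*m) * (((2:ℕ)^(n+1):ℕ):ℂ)) * e2 n (-(a*m'*G^2)) by ring,
      key, hsga, hsgam, he2eC]
    congr 1
    -- remaining: (((1+z)/√2)⁻¹)^3 * ((1+z')/√2) = (1 + eC (-↑a/4))^3 * (1+z')/4
    set z : ℂ := eC ((a:ℂ)/4) with hzdef
    have hz2 : z^2 = -1 := by
      rw [hzdef, eC_pow]
      rw [show ((2:ℕ):ℂ) * ((a:ℂ)/4) = (a:ℂ)/2 by push_cast; ring]
      exact eC_odd_half a ha
    have h1z : (1 + z) ≠ 0 := by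
      intro h
      have hz : z = -1 := by linear_combination h
      rw [hz] at hz2
      norm_num at hz2
    have hzinv : eC (-(a:ℂ)/4) = -z := by
      have h7 : eC (-(a:ℂ)/4) = z⁻¹ := by
        rw [hzdef, eC_inv]
        congr 1
        ring
      rw [h7]
      have hmul : z * (-z) = 1 := by linear_combination -hz2
      exact inv_eq_of_mul_eq_one_right hmul
    have hs2 : ((Real.sqrt 2:ℝ):ℂ) ≠ 0 := sqrt_ne_zero' _ (by norm_num)
    have hs22 : ((Real.sqrt 2:ℝ):ℂ)^2 = 2 := by
      rw [← Complex.ofReal_pow, Real.sq_sqrt (by norm_num : (0:ℝ) ≤ 2)]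
      norm_num
    rw [hzinv]
    have hkey2 : (1+z)*(1-z) = 2 := by linear_combination -hz2
    have hstep : (((1+z) / ((Real.sqrt 2:ℝ):ℂ))⁻¹) = ((Real.sqrt 2:ℝ):ℂ) * (1 - z) / 2 := by
      rw [inv_div]
      rw [div_eq_div_iff h1z (by norm_num : (2:ℂ) ≠ 0)]
      linear_combination ((Real.sqrt 2:ℝ):ℂ) * hz2
    rw [hstep]
    have hr3 : (((Real.sqrt 2:ℝ):ℂ) * (1 - z) / 2)^3 * ((1 + eC ((a:ℂ)*(m:ℂ)/4)) / ((Real.sqrt 2:ℝ):ℂ))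
        = (((Real.sqrt 2:ℝ):ℂ)^2) * ((1-z)^3*(1 + eC ((a:ℂ)*(m:ℂ)/4)))/8 := by
      field_simp
      ring
    rw [hr3, hs22]
    ring
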